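/- Let b ≥ 2 and let D be a finite set of nonnegative integers. Suppose B is a P_D-blocking of the Protasov tree of b of minimal cardinality, i.e., every P_D-blocking B' satisfies #B' ≥ #B. Then B is symmetric: whenever (k,m) ∈ B and (k',m') is a vertex with τ(k',m') = τ(k,m), then (k',m') ∈ B. -/

import Mathlib

open Polynomial

/-- The mask polynomial `P_A(X) = ∑_{a ∈ A} X^a ∈ ℤ[X]` of a finite set of naturals. -/
noncomputable def mask (A : Finset ℕ) : Polynomial ℤ := ∑ a ∈ A, X ^ a

/-- `(k, m)` is a vertex of the Protasov tree of `b`. -/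
def IsVertex (b : ℕ) (v : ℕ × ℕ) : Prop :=
  1 ≤ v.1 ∧ 1 ≤ v.2 ∧ v.2 < b ^ v.1 ∧ ¬ b ∣ v.2

/-- `τ(k, m) = b^k / gcd(m, b^k)`. -/
def tau (b : ℕ) (v : ℕ × ℕ) : ℕ := b ^ v.1 / Nat.gcd v.2 (b ^ v.1)

/-- An infinite path in the Protasov tree of `b` (indices `k ≥ 1`). -/
def IsPath (b : ℕ) (m : ℕ → ℕ) : Prop :=
  (1 ≤ m 1 ∧ m 1 ≤ b - 1) ∧
    ∀ k : ℕ, 1 ≤ k → 1 ≤ m (k + 1) ∧ m (k + 1) < b ^ (k + 1) ∧ m (k + 1) ≡ m k [MOD b ^ k]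

/-- A blocking of the Protasov tree. -/
def IsBlocking (b : ℕ) (B : Set (ℕ × ℕ)) : Prop :=
  B.Finite ∧ (∀ v ∈ B, IsVertex b v) ∧
    ∀ m : ℕ → ℕ, IsPath b m → ∃! k : ℕ, 1 ≤ k ∧ (k, m k) ∈ B

/-- A `P_D`-blocking: a blocking all of whose vertices are zeros of the mask polynomial. -/
def IsPDBlocking (b : ℕ) (D : Finset ℕ) (B : Set (ℕ × ℕ)) : Prop :=
  IsBlocking b B ∧ ∀ v ∈ B, Polynomial.aeval
    (Complex.exp (2 * Real.pi * Complex.I * (v.2 : ℂ) / (b : ℂ) ^ v.1)) (mask D) = 0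

/-! ### Auxiliary definitions and lemmas -/

set_option linter.unusedSectionVars false

/-- A vertex is "good" if the mask polynomial vanishes at the corresponding root of unity. -/
def Good (b : ℕ) (D : Finset ℕ) (v : ℕ × ℕ) : Prop :=
  Polynomial.aeval (Complex.exp (2 * Real.pi * Complex.I * (v.2 : ℂ) / (b : ℂ) ^ v.1)) (mask D) = 0

lemma prim_root (b : ℕ) (hb : 2 ≤ b) (v : ℕ × ℕ) (hv : IsVertex b v) :
    IsPrimitiveRoot (Complex.exp (2 * Real.pi * Complex.I * (v.2 : ℂ) / (b : ℂ) ^ v.1)) (tau b v) := by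
  obtain ⟨k, m⟩ := v
  obtain ⟨hk, hm1, hmlt, hbm⟩ := hv
  simp only [tau] at *
  have hN : (b ^ k) ≠ 0 := by positivity
  set g := Nat.gcd m (b ^ k) with hg
  have hgpos : 0 < g := Nat.gcd_pos_of_pos_left _ hm1
  have hgdvd : g ∣ b ^ k := Nat.gcd_dvd_right _ _
  have hgm : g ∣ m := Nat.gcd_dvd_left _ _
  have hfact : b ^ k = g * (b ^ k / g) := (Nat.mul_div_cancel' hgdvd).symm
  have hbase := Complex.isPrimitiveRoot_exp (b ^ k) hN
  have h1 : IsPrimitiveRoot (Complex.exp (2 * Real.pi * Complex.I / (b ^ k : ℕ)) ^ g) (b ^ k / g) :=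
    hbase.pow (Nat.pos_of_ne_zero hN) hfact
  have hcop : Nat.Coprime (m / g) (b ^ k / g) := Nat.coprime_div_gcd_div_gcd hgpos
  have h2 := h1.pow_of_coprime (m / g) hcop
  have h3 : (Complex.exp (2 * Real.pi * Complex.I / (b ^ k : ℕ)) ^ g) ^ (m / g)
      = Complex.exp (2 * Real.pi * Complex.I * (m : ℂ) / (b : ℂ) ^ k) := by
    rw [← pow_mul, ← Complex.exp_nat_mul, Nat.mul_div_cancel' hgm]
    congr 1
    have hb0 : (b : ℂ) ^ k ≠ 0 := by
      have hbb : (b : ℂ) ≠ 0 := by exact_mod_cast (by omega : b ≠ 0)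
      exact pow_ne_zero k hbb
    push_cast
    field_simp
  rwa [h3] at h2

lemma tau_pos (b : ℕ) (hb : 2 ≤ b) (v : ℕ × ℕ) : 0 < tau b v := by
  apply Nat.div_pos (Nat.le_of_dvd (by positivity) (Nat.gcd_dvd_right _ _))
  exact Nat.gcd_pos_of_pos_right _ (by positivity)

lemma good_of_tau_eq (b : ℕ) (hb : 2 ≤ b) (D : Finset ℕ) (v w : ℕ × ℕ)
    (hv : IsVertex b v) (hw : IsVertex b w) (ht : tau b w = tau b v)
    (hgood : Good b D v) : Good b D w := by
  have hpv := prim_root b hb v hv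
  have hpw := prim_root b hb w hw
  rw [ht] at hpw
  set n := tau b v with hn
  have hnpos : 0 < n := tau_pos b hb v
  have hcyc : Polynomial.cyclotomic n ℚ = minpoly ℚ _ := Polynomial.cyclotomic_eq_minpoly_rat hpv hnpos
  have hroot : Polynomial.aeval (Complex.exp (2 * Real.pi * Complex.I * (v.2 : ℂ) / (b : ℂ) ^ v.1))
      ((mask D).map (algebraMap ℤ ℚ)) = 0 := by
    rw [Polynomial.aeval_map_algebraMap]; exact hgood
  have hdvd : Polynomial.cyclotomic n ℚ ∣ (mask D).map (algebraMap ℤ ℚ) := by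
    rw [hcyc]; exact minpoly.dvd ℚ _ hroot
  obtain ⟨Q, hQ⟩ := hdvd
  have hcycw : Polynomial.aeval (Complex.exp (2 * Real.pi * Complex.I * (w.2 : ℂ) / (b : ℂ) ^ w.1))
      (Polynomial.cyclotomic n ℚ) = 0 := by
    have h := hpw.isRoot_cyclotomic hnpos (R := ℂ)
    rw [Polynomial.aeval_def, Polynomial.eval₂_eq_eval_map, Polynomial.map_cyclotomic]
    exact h
  show Polynomial.aeval (Complex.exp (2 * Real.pi * Complex.I * (w.2 : ℂ) / (b : ℂ) ^ w.1)) (mask D) = 0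
  rw [← Polynomial.aeval_map_algebraMap (R := ℤ) (A := ℚ) (B := ℂ), hQ, map_mul, hcycw, zero_mul]

section Helpers
variable {b : ℕ} (hb : 2 ≤ b)

lemma mod_pow_pos {m j : ℕ} (hbm : ¬ b ∣ m) (hj : 1 ≤ j) : 1 ≤ m % b ^ j := by
  rcases Nat.eq_zero_or_pos (m % b ^ j) with h | h
  · exact absurd (dvd_trans (dvd_pow_self b (by omega)) (Nat.dvd_of_mod_eq_zero h)) hbm
  · exact h

lemma mod_mod_pow {m t j : ℕ} (h : t ≤ j) : m % b ^ j % b ^ t = m % b ^ t :=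
  Nat.mod_mod_of_dvd _ (pow_dvd_pow b h)

lemma not_dvd_mod_pow {m j : ℕ} (hbm : ¬ b ∣ m) (hj : 1 ≤ j) : ¬ b ∣ m % b ^ j := by
  intro h
  apply hbm
  have h1 : m % b ^ j % b = m % b := by
    have := mod_mod_pow (b := b) (m := m) (t := 1) (j := j) hj
    simpa [pow_one] using this
  rw [Nat.dvd_iff_mod_eq_zero] at h ⊢
  rw [← h1]; exact h

lemma trunc_vertex {m j : ℕ} (hbpos : 0 < b) (hbm : ¬ b ∣ m) (hj : 1 ≤ j) :
    IsVertex b (j, m % b ^ j) :=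
  ⟨hj, mod_pow_pos hbm hj, Nat.mod_lt _ (by positivity), not_dvd_mod_pow hbm hj⟩

lemma gcd_mod_pow {m j : ℕ} : Nat.gcd (m % b ^ j) (b ^ j) = Nat.gcd m (b ^ j) := by
  conv_rhs => rw [Nat.gcd_comm, Nat.gcd_rec]

lemma gcd_pow_le {m j k : ℕ} (h : j ≤ k) :
    Nat.gcd m (b ^ j) = Nat.gcd (Nat.gcd m (b ^ k)) (b ^ j) := by
  rw [Nat.gcd_assoc, Nat.gcd_eq_right (pow_dvd_pow b h)]

lemma tau_trunc {m j k : ℕ} (h : j ≤ k) :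
    tau b (j, m % b ^ j) = b ^ j / Nat.gcd (Nat.gcd m (b ^ k)) (b ^ j) := by
  simp only [tau]
  rw [gcd_mod_pow, gcd_pow_le h]

include hb in
lemma tau_eq_level {v w : ℕ × ℕ} (hv : IsVertex b v) (hw : IsVertex b w)
    (ht : tau b w = tau b v) : w.1 = v.1 ∧ Nat.gcd w.2 (b ^ w.1) = Nat.gcd v.2 (b ^ v.1) := by
  obtain ⟨hk, hm1, hmlt, hbm⟩ := hv
  obtain ⟨hk', hm1', hmlt', hbm'⟩ := hw
  set k := v.1; set k' := w.1
  set g := Nat.gcd v.2 (b ^ k) with hgdef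
  set g' := Nat.gcd w.2 (b ^ k') with hgdef'
  have hgd : g ∣ b ^ k := Nat.gcd_dvd_right _ _
  have hgd' : g' ∣ b ^ k' := Nat.gcd_dvd_right _ _
  have h1 : g * tau b v = b ^ k := Nat.mul_div_cancel' hgd
  have h2 : g' * tau b w = b ^ k' := Nat.mul_div_cancel' hgd'
  rw [ht] at h2
  have htpos : 0 < tau b v := by
    apply Nat.div_pos (Nat.le_of_dvd (by positivity) hgd)
    exact Nat.gcd_pos_of_pos_right _ (by positivity)
  have hbg : ¬ b ∣ g := fun h => hbm (h.trans (Nat.gcd_dvd_left _ _))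
  have hbg' : ¬ b ∣ g' := fun h => hbm' (h.trans (Nat.gcd_dvd_left _ _))
  have hkk : k' = k := by
    by_contra hne
    rcases Nat.lt_or_ge k' k with hlt | hge
    · have : g * tau b v = b ^ (k - k') * (g' * tau b v) := by
        rw [h1, h2, ← pow_add]
        congr 1
        omega
      have hg : g = b ^ (k - k') * g' := by
        exact Nat.eq_of_mul_eq_mul_right htpos (by linarith [this] : g * tau b v = b ^ (k - k') * g' * tau b v)
      exact hbg (hg ▸ Dvd.dvd.mul_right (dvd_pow_self b (by omega)) g')
    · have hlt : k < k' := by omega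
      have : g' * tau b v = b ^ (k' - k) * (g * tau b v) := by
        rw [h1, h2, ← pow_add]
        congr 1
        omega
      have hg : g' = b ^ (k' - k) * g := by
        exact Nat.eq_of_mul_eq_mul_right htpos (by linarith [this] : g' * tau b v = b ^ (k' - k) * g * tau b v)
      exact hbg' (hg ▸ Dvd.dvd.mul_right (dvd_pow_self b (by omega)) g)
  refine ⟨hkk, ?_⟩
  rw [hkk] at h2
  rw [← h1] at h2
  exact Nat.eq_of_mul_eq_mul_right htpos h2

include hb in
lemma path_lt {m : ℕ → ℕ} (hm : IsPath b m) {k : ℕ} (hk : 1 ≤ k) : m k < b ^ k := by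
  rcases k with _ | k
  · omega
  rcases Nat.eq_zero_or_pos k with rfl | hk'
  · show m 1 < b ^ 1
    have h := hm.1.2
    have hp : b ^ 1 = b := pow_one b
    omega
  · exact (hm.2 k hk').2.1

include hb in
lemma path_pos {m : ℕ → ℕ} (hm : IsPath b m) {k : ℕ} (hk : 1 ≤ k) : 1 ≤ m k := by
  rcases k with _ | k
  · omega
  rcases Nat.eq_zero_or_pos k with rfl | hk'
  · exact hm.1.1
  · exact (hm.2 k hk').1

include hb in
lemma path_not_dvd {m : ℕ → ℕ} (hm : IsPath b m) {k : ℕ} (hk : 1 ≤ k) : ¬ b ∣ m k := by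
  induction k with
  | zero => omega
  | succ k ih =>
    rcases Nat.eq_zero_or_pos k with rfl | hk'
    · show ¬ b ∣ m 1
      have h1 := hm.1
      intro hdvd
      have := Nat.le_of_dvd (by omega) hdvd
      omega
    · have h3 := (hm.2 k hk').2.2
      intro hdvd
      apply ih hk'
      have hbk : (b : ℕ) ∣ b ^ k := dvd_pow_self b (by omega)
      have h4 : m (k+1) % b = m k % b := Nat.ModEq.of_dvd hbk h3
      have h5 : m (k+1) % b = 0 := by
        obtain ⟨c, hc⟩ := hdvd
        rw [hc]; exact Nat.mul_mod_right b c
      exact Nat.dvd_of_mod_eq_zero (by omega)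

include hb in
lemma path_mod {m : ℕ → ℕ} (hm : IsPath b m) {j k : ℕ} (hj : 1 ≤ j) (hjk : j ≤ k) :
    m j = m k % b ^ j := by
  induction k with
  | zero => omega
  | succ k ih =>
    rcases Nat.lt_or_ge k j with h | h
    · have : j = k + 1 := by omega
      subst this
      exact (Nat.mod_eq_of_lt (path_lt hb hm hj)).symm
    · have hk1 : 1 ≤ k := by omega
      have h3 := (hm.2 k hk1).2.2
      have hmod : m (k+1) % b ^ j = m k % b ^ j := by
        have := Nat.ModEq.of_dvd (pow_dvd_pow b h) h3
        exact this
      rw [hmod, ← ih h]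

include hb in
lemma path_vertex {m : ℕ → ℕ} (hm : IsPath b m) {k : ℕ} (hk : 1 ≤ k) :
    IsVertex b (k, m k) :=
  ⟨hk, path_pos hb hm hk, path_lt hb hm hk, path_not_dvd hb hm hk⟩

/-- The eventually-constant path through `m`. -/
def pathOf (b m : ℕ) : ℕ → ℕ := fun j => m % b ^ j

include hb in
lemma pathOf_isPath {m : ℕ} (hbm : ¬ b ∣ m) : IsPath b (pathOf b m) := by
  have hb0 : 0 < b := by omega
  have hmod1 : ∀ j, 1 ≤ j → 1 ≤ m % b ^ j := by
    intro j hj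
    rcases Nat.eq_zero_or_pos (m % b ^ j) with h | h
    · exact absurd (dvd_trans (dvd_pow_self b (by omega)) (Nat.dvd_of_mod_eq_zero h)) hbm
    · exact h
  constructor
  · constructor
    · simpa [pathOf, pow_one] using hmod1 1 le_rfl
    · have : m % b ^ 1 < b ^ 1 := Nat.mod_lt _ (by positivity)
      simp [pathOf, pow_one] at this ⊢
      omega
  · intro k hk
    refine ⟨hmod1 _ (by omega), Nat.mod_lt _ (by positivity), ?_⟩
    show m % b ^ (k+1) % b ^ k = m % b ^ k % b ^ k
    rw [Nat.mod_mod_of_dvd _ (pow_dvd_pow b (by omega))]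
    exact (Nat.mod_mod_of_dvd m dvd_rfl).symm

end Helpers

/-- A minimal-cardinality `P_D`-blocking is symmetric. -/
theorem stmt15 (b : ℕ) (hb : 2 ≤ b) (D : Finset ℕ) (B : Set (ℕ × ℕ))
    (hB : IsPDBlocking b D B)
    (hmin : ∀ B' : Set (ℕ × ℕ), IsPDBlocking b D B' → B.ncard ≤ B'.ncard) :
    ∀ v ∈ B, ∀ w : ℕ × ℕ, IsVertex b w → tau b w = tau b v → w ∈ B := by
  classical
  obtain ⟨⟨hBfin, hBvert, hBblock⟩, hBgood⟩ := hB
  have hb0 : 0 < b := by omega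
  -- hits of constant paths
  have hhit : ∀ mm : ℕ, ¬ b ∣ mm → ∃! i : ℕ, 1 ≤ i ∧ (i, mm % b ^ i) ∈ B := by
    intro mm h
    exact hBblock (pathOf b mm) (pathOf_isPath hb h)
  -- the symmetric candidate
  set Bstar : Set (ℕ × ℕ) :=
    {u | IsVertex b u ∧ Good b D u ∧ ∀ j, 1 ≤ j → j < u.1 → ¬ Good b D (j, u.2 % b ^ j)}
    with hBstar_def
  -- level bound
  obtain ⟨K, hK⟩ : ∃ K : ℕ, ∀ x ∈ B, x.1 ≤ K := by
    obtain ⟨K, hK⟩ := (hBfin.image Prod.fst).bddAbove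
    exact ⟨K, fun x hx => hK (Set.mem_image_of_mem _ hx)⟩
  have hlev : ∀ u ∈ Bstar, u.1 ≤ K := by
    intro u hu
    obtain ⟨huv, hug, hutr⟩ := hu
    by_contra hgt
    push_neg at hgt
    obtain ⟨i, ⟨hi1, hiB⟩, -⟩ := hhit u.2 huv.2.2.2
    have hiK : i ≤ K := hK _ hiB
    exact hutr i hi1 (by omega) (hBgood _ hiB)
  have hBstarfin : Bstar.Finite := by
    apply Set.Finite.subset ((Set.finite_Iic K).prod (Set.finite_Iic (b ^ K)))
    intro u hu
    have h1 : u.1 ≤ K := hlev u hu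
    have h2 : u.2 ≤ b ^ K :=
      le_trans (le_of_lt hu.1.2.2.1) (Nat.pow_le_pow_right hb0 h1)
    exact ⟨h1, h2⟩
  -- Bstar is a P_D-blocking
  have hBstarblock : IsPDBlocking b D Bstar := by
    refine ⟨⟨hBstarfin, fun u hu => hu.1, ?_⟩, fun u hu => hu.2.1⟩
    intro m hm
    obtain ⟨i, ⟨hi1, hiB⟩, -⟩ := hBblock m hm
    have hex : ∃ j : ℕ, 1 ≤ j ∧ Good b D (j, m j) := ⟨i, hi1, hBgood _ hiB⟩
    set k0 := Nat.find hex with hk0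
    obtain ⟨hk01, hk0g⟩ := Nat.find_spec hex
    refine ⟨k0, ⟨hk01, ⟨path_vertex hb hm hk01, hk0g, ?_⟩⟩, ?_⟩
    · intro j hj1 hjlt
      have : m k0 % b ^ j = m j := (path_mod hb hm hj1 (le_of_lt hjlt)).symm
      rw [this]
      intro hgj
      exact Nat.find_min hex hjlt ⟨hj1, hgj⟩
    · rintro k ⟨hk1, hkv, hkg, hktr⟩
      have hle : k0 ≤ k := Nat.find_min' hex ⟨hk1, hkg⟩
      by_contra hne
      have hlt : k0 < k := lt_of_le_of_ne hle (fun h => hne h.symm)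
      have : m k % b ^ k0 = m k0 := (path_mod hb hm hk01 (le_of_lt hlt)).symm
      exact hktr k0 hk01 hlt (by rw [this]; exact hk0g)
  have hcard1 : B.ncard ≤ Bstar.ncard := hmin Bstar hBstarblock
  -- injection Bstar → B
  have hFex : ∀ u : ℕ × ℕ, ∃ i : ℕ, u ∈ Bstar → (1 ≤ i ∧ u.1 ≤ i ∧ (i, u.2) ∈ B) := by
    intro u
    by_cases hu : u ∈ Bstar
    · obtain ⟨huv, hug, hutr⟩ := hu
      obtain ⟨i, ⟨hi1, hiB⟩, -⟩ := hhit u.2 huv.2.2.2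
      have hui : u.1 ≤ i := by
        by_contra hlt
        push_neg at hlt
        exact hutr i hi1 hlt (hBgood _ hiB)
      refine ⟨i, fun _ => ⟨hi1, hui, ?_⟩⟩
      have hmod : u.2 % b ^ i = u.2 :=
        Nat.mod_eq_of_lt (lt_of_lt_of_le huv.2.2.1 (Nat.pow_le_pow_right hb0 hui))
      rwa [hmod] at hiB
    · exact ⟨0, fun h => absurd h hu⟩
  choose fI hfI using hFex
  have hinj : Set.InjOn (fun u => ((fI u, u.2) : ℕ × ℕ)) Bstar := by
    intro u1 h1 u2 h2 heq
    simp only [Prod.mk.injEq] at heq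
    have hsnd : u1.2 = u2.2 := heq.2
    have hfst : u1.1 = u2.1 := by
      by_contra hne
      rcases Nat.lt_or_ge u1.1 u2.1 with hlt | hge
      · apply h2.2.2 u1.1 h1.1.1 hlt
        have : u2.2 % b ^ u1.1 = u1.2 := by
          rw [← hsnd]; exact Nat.mod_eq_of_lt h1.1.2.2.1
        rw [this]
        exact h1.2.1
      · have hlt : u2.1 < u1.1 := by omega
        apply h1.2.2 u2.1 h2.1.1 hlt
        have : u1.2 % b ^ u2.1 = u2.2 := by
          rw [hsnd]; exact Nat.mod_eq_of_lt h2.1.2.2.1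
        rw [this]
        exact h2.2.1
    exact Prod.ext hfst hsnd
  have hcard2 : Bstar.ncard ≤ B.ncard :=
    Set.ncard_le_ncard_of_injOn _ (fun u hu => (hfI u hu).2.2) hinj hBfin
  -- the "least good truncation" map
  have hGex : ∀ y : ℕ × ℕ, ∃ j : ℕ, y ∈ B →
      (1 ≤ j ∧ j ≤ y.1 ∧ Good b D (j, y.2 % b ^ j) ∧
        ∀ t, 1 ≤ t → t < j → ¬ Good b D (t, y.2 % b ^ t)) := by
    intro y
    by_cases hy : y ∈ B
    · have hvert := hBvert y hy
      have hex : ∃ j : ℕ, 1 ≤ j ∧ Good b D (j, y.2 % b ^ j) := by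
        refine ⟨y.1, hvert.1, ?_⟩
        rw [Nat.mod_eq_of_lt hvert.2.2.1]
        exact hBgood y hy
      refine ⟨Nat.find hex, fun _ => ⟨(Nat.find_spec hex).1, ?_, (Nat.find_spec hex).2, ?_⟩⟩
      · apply Nat.find_min' hex
        refine ⟨hvert.1, ?_⟩
        rw [Nat.mod_eq_of_lt hvert.2.2.1]
        exact hBgood y hy
      · intro t ht1 htlt hGt
        exact Nat.find_min hex htlt ⟨ht1, hGt⟩
    · exact ⟨0, fun h => absurd h hy⟩
  choose jf hjf using hGex
  -- uniqueness characterization of jf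
  have hjfuniq : ∀ y ∈ B, ∀ j : ℕ, 1 ≤ j → Good b D (j, y.2 % b ^ j) →
      (∀ t, 1 ≤ t → t < j → ¬ Good b D (t, y.2 % b ^ t)) → jf y = j := by
    intro y hy j hj1 hjg hjtr
    obtain ⟨h1, h2, h3, h4⟩ := hjf y hy
    rcases lt_trichotomy (jf y) j with h | h | h
    · exact absurd h3 (hjtr (jf y) h1 h)
    · exact h
    · exact absurd hjg (h4 j hj1 h)
  -- gv maps B onto Bstar
  have hgvmem : ∀ y ∈ B, ((jf y, y.2 % b ^ jf y) : ℕ × ℕ) ∈ Bstar := by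
    intro y hy
    obtain ⟨h1, h2, h3, h4⟩ := hjf y hy
    have hbm : ¬ b ∣ y.2 := (hBvert y hy).2.2.2
    refine ⟨trunc_vertex hb0 hbm h1, h3, ?_⟩
    intro t ht1 htlt
    have : y.2 % b ^ jf y % b ^ t = y.2 % b ^ t := mod_mod_pow (le_of_lt htlt)
    rw [this]
    exact h4 t ht1 htlt
  have hsurj : ∀ u ∈ Bstar, ((jf (fI u, u.2), (fI u, u.2).2 % b ^ jf (fI u, u.2)) : ℕ × ℕ) = u := by
    intro u hu
    have hyB : (fI u, u.2) ∈ B := (hfI u hu).2.2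
    have hjeq : jf (fI u, u.2) = u.1 := by
      apply hjfuniq _ hyB u.1 hu.1.1
      · show Good b D (u.1, u.2 % b ^ u.1)
        rw [Nat.mod_eq_of_lt hu.1.2.2.1]
        exact hu.2.1
      · intro t ht1 htlt
        show ¬ Good b D (t, u.2 % b ^ t)
        exact hu.2.2 t ht1 htlt
    rw [hjeq]
    show ((u.1, u.2 % b ^ u.1) : ℕ × ℕ) = u
    rw [Nat.mod_eq_of_lt hu.1.2.2.1]
  -- B ⊆ Bstar
  have hBsub : B ⊆ Bstar := by
    intro x hx
    have hvx := hBvert x hx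
    have hbmx : ¬ b ∣ x.2 := hvx.2.2.2
    obtain ⟨hjx1, hjxle, hjxg, hjxtr⟩ := hjf x hx
    by_cases hjk : jf x = x.1
    · refine ⟨hvx, hBgood x hx, ?_⟩
      intro j hj1 hjlt
      exact hjxtr j hj1 (by omega)
    · exfalso
      set j0 := jf x with hj0def
      have hj0k : j0 < x.1 := lt_of_le_of_ne hjxle hjk
      set r := x.2 % b ^ j0 with hrdef
      have hrlt : r < b ^ j0 := Nat.mod_lt _ (by positivity)
      set ℓv := x.2 % b ^ (j0 + 1) / b ^ j0 with hℓvdef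
      set ℓ := if ℓv = 0 then 1 else 0 with hℓdef
      have hℓle : ℓ ≤ 1 := by rw [hℓdef]; split <;> omega
      have hℓne : ℓ ≠ ℓv := by rw [hℓdef]; split <;> omega
      set m' := ℓ * b ^ j0 + r with hm'def
      have hm'lt : m' < b ^ (j0 + 1) := by
        have h2b : 2 * b ^ j0 ≤ b ^ (j0 + 1) := by
          rw [pow_succ]
          calc 2 * b ^ j0 = b ^ j0 * 2 := by ring
          _ ≤ b ^ j0 * b := Nat.mul_le_mul_left _ hb
        have : m' ≤ 1 * b ^ j0 + r := by
          apply Nat.add_le_add_right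
          exact Nat.mul_le_mul_right _ hℓle
        omega
      have hbm' : ¬ b ∣ m' := by
        intro hdvd
        have hd1 : b ∣ ℓ * b ^ j0 := Dvd.dvd.mul_left (dvd_pow_self b (by omega)) ℓ
        have hd2 : b ∣ r := by
          rw [hm'def] at hdvd
          have := Nat.dvd_sub hdvd hd1
          simpa using this
        exact not_dvd_mod_pow hbmx hjx1 hd2
      have hm'mod : ∀ t, t ≤ j0 → m' % b ^ t = x.2 % b ^ t := by
        intro t ht
        have hd : b ^ t ∣ ℓ * b ^ j0 := Dvd.dvd.mul_left (pow_dvd_pow b ht) ℓ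
        obtain ⟨c, hc⟩ := hd
        show (ℓ * b ^ j0 + r) % b ^ t = x.2 % b ^ t
        rw [hc, Nat.add_comm, Nat.add_mul_mod_self_left]
        exact mod_mod_pow ht
      obtain ⟨i', ⟨hi'1, hi'B⟩, -⟩ := hhit m' hbm'
      -- the hit is strictly below level j0
      have hi'gt : j0 < i' := by
        by_contra hle
        push_neg at hle
        obtain ⟨i0, hi0, huniq0⟩ := hhit x.2 hbmx
        have hmem : ((i', x.2 % b ^ i') : ℕ × ℕ) ∈ B := by
          rw [← hm'mod i' hle]; exact hi'B
        have e1 : i' = i0 := huniq0 i' ⟨hi'1, hmem⟩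
        have e2 : x.1 = i0 := by
          apply huniq0 x.1
          refine ⟨hvx.1, ?_⟩
          rw [Nat.mod_eq_of_lt hvx.2.2.1]
          exact hx
        omega
      have hm'full : m' % b ^ i' = m' :=
        Nat.mod_eq_of_lt (lt_of_lt_of_le hm'lt (Nat.pow_le_pow_right hb0 hi'gt))
      set x' : ℕ × ℕ := (i', m' % b ^ i') with hx'def
      have hx'B : x' ∈ B := hi'B
      have hxx' : x' ≠ x := by
        intro he
        have h1 : i' = x.1 := congrArg Prod.fst he
        have h2 : m' = x.2 := by
          have h2' := congrArg Prod.snd he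
          rw [← hm'full]
          exact h2'
        -- digit contradiction
        apply hℓne
        have hdig : m' % b ^ (j0 + 1) = m' := Nat.mod_eq_of_lt hm'lt
        have : ℓv = m' / b ^ j0 := by
          rw [hℓvdef, ← h2, hdig]
        rw [this, hm'def]
        rw [Nat.mul_comm ℓ (b ^ j0), Nat.mul_add_div (by positivity)]
        rw [Nat.div_eq_of_lt hrlt]
        omega
      -- gv x' = gv x
      have hjx' : jf x' = j0 := by
        apply hjfuniq x' hx'B j0 hjx1
        · show Good b D (j0, x'.2 % b ^ j0)
          have : x'.2 % b ^ j0 = r := by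
            show m' % b ^ i' % b ^ j0 = r
            rw [hm'full, hm'mod j0 le_rfl]
          rw [this]
          exact hjxg
        · intro t ht1 htlt
          show ¬ Good b D (t, x'.2 % b ^ t)
          have : x'.2 % b ^ t = x.2 % b ^ t := by
            show m' % b ^ i' % b ^ t = x.2 % b ^ t
            rw [hm'full, hm'mod t (le_of_lt htlt)]
          rw [this]
          exact hjxtr t ht1 htlt
      -- counting contradiction
      have hBm : Bstar ⊆ (fun y => ((jf y, y.2 % b ^ jf y) : ℕ × ℕ)) '' (B \ {x'}) := by
        intro u hu
        by_cases hcase : ((fI u, u.2) : ℕ × ℕ) = x'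
        · refine ⟨x, ⟨hx, fun hmem => hxx' (Set.mem_singleton_iff.mp hmem).symm⟩, ?_⟩
          show ((jf x, x.2 % b ^ jf x) : ℕ × ℕ) = u
          have hgr : ((jf x, x.2 % b ^ jf x) : ℕ × ℕ) = (j0, r) := rfl
          have hgr' : ((jf x', x'.2 % b ^ jf x') : ℕ × ℕ) = (j0, r) := by
            rw [hjx']
            show ((j0, m' % b ^ i' % b ^ j0) : ℕ × ℕ) = (j0, r)
            rw [hm'full, hm'mod j0 le_rfl]
          have := hsurj u hu
          rw [hcase] at this
          rw [hgr, ← hgr', this]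
        · exact ⟨(fI u, u.2), ⟨(hfI u hu).2.2, hcase⟩, hsurj u hu⟩
      have hc3 : Bstar.ncard ≤ (B \ {x'}).ncard := by
        calc Bstar.ncard ≤ ((fun y => ((jf y, y.2 % b ^ jf y) : ℕ × ℕ)) '' (B \ {x'})).ncard :=
              Set.ncard_le_ncard hBm (hBfin.diff.image _)
        _ ≤ (B \ {x'}).ncard := Set.ncard_image_le hBfin.diff
      have hc4 : (B \ {x'}).ncard < B.ncard :=
        Set.ncard_diff_singleton_lt_of_mem hx'B hBfin
      omega
  have hBeq : B = Bstar := Set.eq_of_subset_of_ncard_le hBsub hcard2 hBstarfin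
  -- conclusion
  intro v hvB w hw htau
  have hvstar : v ∈ Bstar := hBeq ▸ hvB
  obtain ⟨hvert_v, hgood_v, htrunc_v⟩ := hvstar
  obtain ⟨hfst, hgcd⟩ := tau_eq_level hb hvert_v hw htau
  rw [hBeq]
  refine ⟨hw, good_of_tau_eq b hb D v w hvert_v hw htau hgood_v, ?_⟩
  intro j hj1 hjlt
  intro hgj
  apply htrunc_v j hj1 (by omega)
  -- transfer goodness from w-truncation to v-truncation via equal tau
  have htw : tau b (j, w.2 % b ^ j) = b ^ j / Nat.gcd (Nat.gcd w.2 (b ^ w.1)) (b ^ j) :=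
    tau_trunc (le_of_lt hjlt)
  have htv : tau b (j, v.2 % b ^ j) = b ^ j / Nat.gcd (Nat.gcd v.2 (b ^ v.1)) (b ^ j) :=
    tau_trunc (by omega)
  have htaueq : tau b (j, v.2 % b ^ j) = tau b (j, w.2 % b ^ j) := by
    rw [htw, htv, hgcd]
  exact good_of_tau_eq b hb D (j, w.2 % b ^ j) (j, v.2 % b ^ j)
    (trunc_vertex hb0 hw.2.2.2 hj1) (trunc_vertex hb0 hvert_v.2.2.2 hj1) htaueq hgj
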